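/- Let c : {0,1}^n → {0,1}, let G : {0,1}^m → {0,1}^{n+1} be any map, and let D be the pushforward of the uniform distribution on {0,1}^m under G. Then the total variation distance satisfies d_TV(D, D_c) ≥ 1 − 2^{m−n} (as real numbers; the bound is vacuous when m ≥ n). -/

import Mathlib

/-- The graph distribution `D_c` on `{0,1}^{n+1}` of a Boolean function
`c : {0,1}^n → {0,1}`: it assigns probability `2^{-n}` to each string `x‖c(x)`
and `0` otherwise. -/
noncomputable def boolGraphDist (n : ℕ) (c : (Fin n → Bool) → Bool) :
    (Fin (n + 1) → Bool) → ℝ :=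
  fun y => if ∃ x : Fin n → Bool, y = Fin.snoc x (c x) then (1 : ℝ) / 2 ^ n else 0

/-- The pushforward of the uniform distribution on `{0,1}^m` under
`G : {0,1}^m → {0,1}^{n+1}`. -/
noncomputable def pushUnif (n m : ℕ) (G : (Fin m → Bool) → (Fin (n + 1) → Bool)) :
    (Fin (n + 1) → Bool) → ℝ :=
  fun y => ((Finset.univ.filter fun x : Fin m → Bool => G x = y).card : ℝ) / 2 ^ m

/-- Total variation distance between distributions on a finite type. -/
noncomputable def tvDist {α : Type*} [Fintype α] (P Q : α → ℝ) : ℝ :=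
  (1 / 2) * ∑ y, |P y - Q y|

theorem tvDist_pushUnif_ge (n m : ℕ) (c : (Fin n → Bool) → Bool)
    (G : (Fin m → Bool) → (Fin (n + 1) → Bool)) :
    1 - (2 : ℝ) ^ ((m : ℝ) - (n : ℝ)) ≤ tvDist (pushUnif n m G) (boolGraphDist n c) := by
  classical
  set P := pushUnif n m G with hP
  set Q := boolGraphDist n c with hQ
  -- P sums to 1
  have hP1 : ∑ y, P y = 1 := by
    have hc : (Finset.univ : Finset (Fin m → Bool)).card
        = ∑ y : Fin (n+1) → Bool, (Finset.univ.filter fun x => G x = y).card :=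
      Finset.card_eq_sum_card_fiberwise (fun x _ => Finset.mem_univ (G x))
    simp only [hP, pushUnif]
    rw [← Finset.sum_div, ← Nat.cast_sum, ← hc]
    simp [Finset.card_univ]
  -- the graph set
  set f : (Fin n → Bool) → (Fin (n+1) → Bool) := fun x => Fin.snoc x (c x) with hf
  have hinj : Function.Injective f := by
    intro a b h
    funext i
    have := congrFun h i.castSucc
    simpa [hf, Fin.snoc_castSucc] using this
  set S : Finset (Fin (n+1) → Bool) :=
    Finset.univ.filter (fun y => ∃ x, y = f x) with hS
  have hSimg : S = Finset.image f Finset.univ := by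
    ext y
    simp [hS, eq_comm]
  have hScard : (S.card : ℝ) = 2 ^ n := by
    rw [hSimg, Finset.card_image_of_injective _ hinj]
    simp [Finset.card_univ]
  -- Q sums to 1
  have hQ1 : ∑ y, Q y = 1 := by
    have : ∑ y, Q y = ∑ y ∈ S, (1 : ℝ) / 2 ^ n := by
      rw [Finset.sum_filter]
      simp [hQ, boolGraphDist, hf]
    rw [this, Finset.sum_const, nsmul_eq_mul, hScard]
    field_simp
  -- the set of graph points outside the range of G
  set T : Finset (Fin (n+1) → Bool) :=
    Finset.univ.filter (fun y => (∃ x, y = f x) ∧ ∀ z, G z ≠ y) with hT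
  have hPT : ∀ y ∈ T, P y = 0 := by
    intro y hy
    simp only [hT, Finset.mem_filter] at hy
    have : (Finset.univ.filter fun x : Fin m → Bool => G x = y) = ∅ := by
      apply Finset.filter_false_of_mem
      intro x _
      exact hy.2.2 x
    simp [hP, pushUnif, this]
  have hQT : ∀ y ∈ T, Q y = 1 / 2 ^ n := by
    intro y hy
    simp only [hT, Finset.mem_filter] at hy
    simp [hQ, boolGraphDist, hf, hy.2.1]; intro h; obtain ⟨x, hx⟩ := hy.2.1; exact absurd hx (h x)
  -- lower bound on |T|
  have hTcard : (2 : ℝ) ^ n - 2 ^ m ≤ (T.card : ℝ) := by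
    have hsub : S \ Finset.image G Finset.univ ⊆ T := by
      intro y hy
      rw [Finset.mem_sdiff] at hy
      simp only [hT, Finset.mem_filter, Finset.mem_univ, true_and]
      refine ⟨(Finset.mem_filter.mp hy.1).2, fun z hz => hy.2 ?_⟩
      rw [Finset.mem_image]
      exact ⟨z, Finset.mem_univ z, hz⟩
    have h1 : S.card ≤ (S \ Finset.image G Finset.univ).card
        + (Finset.image G Finset.univ).card := Finset.card_le_card_sdiff_add_card
    have h2 : (S \ Finset.image G Finset.univ).card ≤ T.card := Finset.card_le_card hsub
    have h3 : (Finset.image G Finset.univ).card ≤ 2 ^ m := by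
      calc (Finset.image G Finset.univ).card ≤ (Finset.univ : Finset (Fin m → Bool)).card :=
            Finset.card_image_le
        _ = 2 ^ m := by simp [Finset.card_univ]
    have : S.card ≤ T.card + 2 ^ m := le_trans h1 (by omega)
    have := (Nat.cast_le (α := ℝ)).mpr this
    push_cast at this
    rw [hScard] at *
    linarith [hScard]
  set a : ℝ := (T.card : ℝ) / 2 ^ n with ha
  have key1 : ∑ y ∈ T, (Q y - P y) = a := by
    rw [Finset.sum_congr rfl (fun y hy => by rw [hQT y hy, hPT y hy, sub_zero])]
    rw [Finset.sum_const, nsmul_eq_mul, ha]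
    ring
  have key2 : ∑ y ∈ Tᶜ, (P y - Q y) = a := by
    have hsplit : ∑ y ∈ T, (P y - Q y) + ∑ y ∈ Tᶜ, (P y - Q y)
        = ∑ y, (P y - Q y) := Finset.sum_add_sum_compl T _
    have htot : ∑ y, (P y - Q y) = 0 := by
      rw [Finset.sum_sub_distrib, hP1, hQ1]; ring
    have hneg : ∑ y ∈ T, (P y - Q y) = -a := by
      rw [Finset.sum_sub_distrib] at key1 ⊢
      linarith [key1]
    linarith [hsplit, htot, hneg]
  have habs : 2 * a ≤ ∑ y, |P y - Q y| := by
    rw [← Finset.sum_add_sum_compl T (fun y => |P y - Q y|)]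
    have h1 : ∑ y ∈ T, (Q y - P y) ≤ ∑ y ∈ T, |P y - Q y| :=
      Finset.sum_le_sum (fun y _ => by rw [abs_sub_comm]; exact le_abs_self _)
    have h2 : ∑ y ∈ Tᶜ, (P y - Q y) ≤ ∑ y ∈ Tᶜ, |P y - Q y| :=
      Finset.sum_le_sum (fun y _ => le_abs_self _)
    linarith [key1, key2, h1, h2]
  have hrpow : (2 : ℝ) ^ ((m : ℝ) - (n : ℝ)) = 2 ^ m / 2 ^ n := by
    rw [Real.rpow_sub (by norm_num), Real.rpow_natCast, Real.rpow_natCast]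
  have hfin : 1 - (2 : ℝ) ^ ((m : ℝ) - (n : ℝ)) ≤ a := by
    rw [hrpow, ha]
    have h2n : (0 : ℝ) < 2 ^ n := by positivity
    rw [le_div_iff₀ h2n, sub_mul, one_mul, div_mul_cancel₀ _ (ne_of_gt h2n)]
    linarith [hTcard]
  calc 1 - (2 : ℝ) ^ ((m : ℝ) - (n : ℝ)) ≤ a := hfin
    _ ≤ tvDist P Q := by rw [tvDist]; linarith [habs]
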